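/- Let P be an irreducible upward skip-free transition matrix on ℕ and c : ℕ → [0,∞) a finite nonnegative function. Then the potential satisfies φ(i) = ∑_{m=i}^∞ ∑_{k=0}^{m} F_m^{(k)}·c(k)/P(k,k+1) for every i (equality in [0,∞]); moreover φ(i) < ∞ for all i if and only if φ(0) < ∞. -/

import Mathlib

open scoped ENNReal
open Filter Topology

/-- Matrix powers of a nonnegative kernel on ℕ, values in `[0,∞]`. -/
noncomputable def matPow (P : ℕ → ℕ → ℝ≥0∞) : ℕ → ℕ → ℕ → ℝ≥0∞
  | 0, i, j => if i = j then 1 else 0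
  | k + 1, i, j => ∑' l : ℕ, matPow P k i l * P l j

/-- A transition matrix on ℕ: rows sum to one. -/
def IsTransitionMatrix (P : ℕ → ℕ → ℝ≥0∞) : Prop :=
  ∀ i, ∑' j : ℕ, P i j = 1

/-- Irreducibility: every state reaches every state. -/
def MCIrreducible (P : ℕ → ℕ → ℝ≥0∞) : Prop :=
  ∀ i j : ℕ, ∃ k : ℕ, 0 < matPow P k i j

/-- Upward skip-free: `P(i,i+1) > 0` and `P(i,k) = 0` for `k ≥ i+2`. -/
def UpwardSkipFree (P : ℕ → ℕ → ℝ≥0∞) : Prop :=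
  (∀ i : ℕ, 0 < P i (i + 1)) ∧ ∀ i k : ℕ, i + 2 ≤ k → P i k = 0

/-- The potential `φ(i) = ∑_{k=0}^∞ ∑_j P^k(i,j) c(j)`. -/
noncomputable def potential (P : ℕ → ℕ → ℝ≥0∞) (c : ℕ → ℝ≥0∞) (i : ℕ) : ℝ≥0∞ :=
  ∑' k : ℕ, ∑' j : ℕ, matPow P k i j * c j

/-- `P_n^{(k-)} = ∑_{i=0}^k P(n,i)`. -/
noncomputable def Pminus (P : ℕ → ℕ → ℝ≥0∞) (n k : ℕ) : ℝ≥0∞ :=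
  ∑ l ∈ Finset.range (k + 1), P n l

/-- `F P i n = F_n^{(i)}`: `F_i^{(i)} = 1` and
`F_n^{(i)} = (1/P(n,n+1)) ∑_{k=i}^{n-1} P_n^{(k-)} F_k^{(i)}` for `i < n`. -/
noncomputable def F (P : ℕ → ℕ → ℝ≥0∞) (i : ℕ) : ℕ → ℝ≥0∞
  | n =>
    if n ≤ i then 1
    else (P n (n + 1))⁻¹ *
      ∑ k ∈ (Finset.Ico i n).attach, Pminus P n k.1 * F P i k.1
  termination_by n => n
  decreasing_by
    have h := Finset.mem_Ico.mp k.2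
    omega

namespace USFaux

open Finset

variable {P : ℕ → ℕ → ℝ≥0∞} {c : ℕ → ℝ≥0∞}

lemma P_le_one (hP : IsTransitionMatrix P) (i j : ℕ) : P i j ≤ 1 :=
  (ENNReal.le_tsum j).trans (hP i).le

lemma P_ne_top (hP : IsTransitionMatrix P) (i j : ℕ) : P i j ≠ ∞ :=
  ((P_le_one hP i j).trans_lt ENNReal.one_lt_top).ne

lemma Pup_ne_zero (hup : UpwardSkipFree P) (i : ℕ) : P i (i+1) ≠ 0 :=
  (hup.1 i).ne'

lemma Pminus_le_one (hP : IsTransitionMatrix P) (n k : ℕ) : Pminus P n k ≤ 1 :=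
  (ENNReal.sum_le_tsum _).trans (hP n).le

lemma F_eq (P : ℕ → ℕ → ℝ≥0∞) (i n : ℕ) :
    F P i n = if n ≤ i then 1
      else (P n (n + 1))⁻¹ * ∑ k ∈ (Finset.Ico i n).attach, Pminus P n k.1 * F P i k.1 := by
  rw [F]

lemma F_ne_top (hP : IsTransitionMatrix P) (hup : UpwardSkipFree P) (i n : ℕ) :
    F P i n ≠ ∞ := by
  induction n using Nat.strong_induction_on with
  | _ n ih =>
    rw [F_eq]
    split
    · exact ENNReal.one_ne_top
    · apply ENNReal.mul_ne_top
      · exact ENNReal.inv_ne_top.mpr (Pup_ne_zero hup n)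
      · rw [← lt_top_iff_ne_top]
        apply ENNReal.sum_lt_top.mpr
        intro k _
        have hk := Finset.mem_Ico.mp k.2
        exact ENNReal.mul_lt_top
          ((Pminus_le_one hP n k.1).trans_lt ENNReal.one_lt_top)
          (lt_top_iff_ne_top.mpr (ih k.1 hk.2))

end USFaux
noncomputable def gfun (P : ℕ → ℕ → ℝ≥0∞) (c : ℕ → ℝ≥0∞) (m : ℕ) : ℝ≥0∞ :=
  ∑ k ∈ Finset.range (m+1), F P k m * c k / P k (k+1)

namespace USFaux2
open Finset USFaux

variable {P : ℕ → ℕ → ℝ≥0∞} {c : ℕ → ℝ≥0∞}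

lemma gfun_ne_top (hP : IsTransitionMatrix P) (hup : UpwardSkipFree P)
    (hc : ∀ j, c j ≠ ∞) (m : ℕ) : gfun P c m ≠ ∞ := by
  rw [← lt_top_iff_ne_top]
  apply ENNReal.sum_lt_top.mpr
  intro k _
  apply ENNReal.div_lt_top
  · exact ENNReal.mul_ne_top (F_ne_top hP hup k m) (hc k)
  · exact Pup_ne_zero hup k

lemma rowsum_fin (hP : IsTransitionMatrix P) (hup : UpwardSkipFree P) (n : ℕ) :
    ∑ l ∈ Finset.range (n+2), P n l = 1 := by
  rw [← hP n]
  refine (tsum_eq_sum ?_).symm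
  intro b hb
  exact hup.2 n b (by simpa [Nat.add_comm] using Finset.mem_range.not.mp hb |> Nat.le_of_not_lt)

lemma Pminus_self_add (hP : IsTransitionMatrix P) (hup : UpwardSkipFree P) (n : ℕ) :
    Pminus P n n + P n (n+1) = 1 := by
  rw [← rowsum_fin hP hup n, Finset.sum_range_succ (f := fun l => P n l) (n := n+1)]
  rfl

lemma key_rec (hP : IsTransitionMatrix P) (hup : UpwardSkipFree P) (i : ℕ) :
    P i (i+1) * gfun P c i = c i + ∑ m ∈ Finset.range i, Pminus P i m * gfun P c m := by
  have ha0 := Pup_ne_zero hup i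
  have hat := P_ne_top hP i (i+1)
  unfold gfun
  rw [Finset.sum_range_succ, mul_add]
  have hlast : P i (i+1) * (F P i i * c i / P i (i+1)) = c i := by
    rw [F_eq]
    simp only [le_refl, if_true, one_mul]
    exact ENNReal.mul_div_cancel ha0 hat
  rw [hlast, Finset.mul_sum, add_comm]
  congr 1
  calc ∑ k ∈ Finset.range i, P i (i+1) * (F P k i * c k / P k (k+1))
      = ∑ k ∈ Finset.range i, ∑ m ∈ Finset.Ico k i,
          Pminus P i m * F P k m * (c k / P k (k+1)) := by
        refine Finset.sum_congr rfl fun k hk => ?_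
        have hki : ¬ i ≤ k := by
          have := Finset.mem_range.mp hk; omega
        rw [F_eq P k i, if_neg hki, ← Finset.sum_attach (Finset.Ico k i)
          (fun m => Pminus P i m * F P k m * (c k / P k (k+1)))]
        set S := ∑ m ∈ (Finset.Ico k i).attach, Pminus P i m.1 * F P k m.1 with hS
        calc P i (i+1) * ((P i (i+1))⁻¹ * S * c k / P k (k+1))
            = (P i (i+1) * (P i (i+1))⁻¹) * (S * (c k * (P k (k+1))⁻¹)) := by
              rw [div_eq_mul_inv]; ring
          _ = S * (c k * (P k (k+1))⁻¹) := by
              rw [ENNReal.mul_inv_cancel ha0 hat, one_mul]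
          _ = ∑ m ∈ (Finset.Ico k i).attach,
                Pminus P i m.1 * F P k m.1 * (c k / P k (k+1)) := by
              rw [hS, Finset.sum_mul]
              exact Finset.sum_congr rfl fun m _ => by rw [div_eq_mul_inv]
    _ = ∑ m ∈ Finset.range i, ∑ k ∈ Finset.range (m+1),
          Pminus P i m * F P k m * (c k / P k (k+1)) := by
        refine Finset.sum_comm' fun k m => ?_
        simp only [Finset.mem_range, Finset.mem_Ico]
        omega
    _ = ∑ m ∈ Finset.range i, Pminus P i m * ∑ k ∈ Finset.range (m+1),
          F P k m * c k / P k (k+1) := by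
        refine Finset.sum_congr rfl fun m _ => ?_
        rw [Finset.mul_sum]
        refine Finset.sum_congr rfl fun k _ => ?_
        rw [mul_div_assoc, mul_assoc]

end USFaux2
namespace USFaux3
open USFaux USFaux2

variable {P R R' : ℕ → ℕ → ℝ≥0∞}

lemma matPow_zero (R : ℕ → ℕ → ℝ≥0∞) (i j : ℕ) :
    matPow R 0 i j = if i = j then 1 else 0 := by rw [matPow]

lemma matPow_succ (R : ℕ → ℕ → ℝ≥0∞) (k i j : ℕ) :
    matPow R (k+1) i j = ∑' l, matPow R k i l * R l j := by rw [matPow]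

lemma matPow_mono (h : ∀ i j, R i j ≤ R' i j) :
    ∀ k i j, matPow R k i j ≤ matPow R' k i j := by
  intro k
  induction k with
  | zero => intro i j; rw [matPow_zero, matPow_zero]
  | succ k ih =>
    intro i j
    rw [matPow_succ, matPow_succ]
    exact ENNReal.tsum_le_tsum fun l => mul_le_mul' (ih i l) (h l j)

lemma matPow_one (R : ℕ → ℕ → ℝ≥0∞) (i j : ℕ) : matPow R 1 i j = R i j := by
  rw [matPow_succ]
  rw [tsum_eq_single i (fun l hl => by rw [matPow_zero, if_neg (Ne.symm hl), zero_mul])]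
  rw [matPow_zero, if_pos rfl, one_mul]

lemma matPow_chapman (R : ℕ → ℕ → ℝ≥0∞) (a b i j : ℕ) :
    matPow R (a+b) i j = ∑' l, matPow R a i l * matPow R b l j := by
  induction b generalizing j with
  | zero =>
    rw [Nat.add_zero]
    rw [tsum_eq_single j (fun l hl => by rw [matPow_zero, if_neg hl, mul_zero])]
    rw [matPow_zero, if_pos rfl, mul_one]
  | succ b ih =>
    rw [← Nat.add_assoc, matPow_succ]
    calc ∑' l, matPow R (a+b) i l * R l j
        = ∑' l, (∑' u, matPow R a i u * matPow R b u l) * R l j := by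
          exact tsum_congr fun l => by rw [ih]
      _ = ∑' l, ∑' u, matPow R a i u * matPow R b u l * R l j := by
          exact tsum_congr fun l => (ENNReal.tsum_mul_right).symm
      _ = ∑' u, ∑' l, matPow R a i u * matPow R b u l * R l j := ENNReal.tsum_comm
      _ = ∑' u, matPow R a i u * ∑' l, matPow R b u l * R l j := by
          refine tsum_congr fun u => ?_
          rw [← ENNReal.tsum_mul_left]
          exact tsum_congr fun l => by rw [mul_assoc]
      _ = ∑' u, matPow R a i u * matPow R (b+1) u j := by
          exact tsum_congr fun u => by rw [matPow_succ]

lemma rowsum_pow (hP : IsTransitionMatrix P) (k i : ℕ) :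
    ∑' j, matPow P k i j = 1 := by
  induction k generalizing i with
  | zero =>
    rw [tsum_eq_single i (fun j hj => by rw [matPow_zero, if_neg (Ne.symm hj)])]
    rw [matPow_zero, if_pos rfl]
  | succ k ih =>
    calc ∑' j, matPow P (k+1) i j
        = ∑' j, ∑' l, matPow P k i l * P l j := tsum_congr fun j => matPow_succ P k i j
      _ = ∑' l, ∑' j, matPow P k i l * P l j := ENNReal.tsum_comm
      _ = ∑' l, matPow P k i l * ∑' j, P l j := tsum_congr fun l => ENNReal.tsum_mul_left
      _ = ∑' l, matPow P k i l := by
          exact tsum_congr fun l => by rw [hP l, mul_one]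
      _ = 1 := ih i

lemma skipfree_pow (hup : UpwardSkipFree P) (k i : ℕ) :
    ∀ j, i + k < j → matPow P k i j = 0 := by
  induction k with
  | zero =>
    intro j hj
    rw [matPow_zero, if_neg (by omega)]
  | succ k ih =>
    intro j hj
    rw [matPow_succ]
    refine ENNReal.tsum_eq_zero.mpr fun l => ?_
    rcases le_or_gt l (i + k) with hl | hl
    · rw [hup.2 l j (by omega), mul_zero]
    · rw [ih l hl, zero_mul]

lemma up_path (m i : ℕ) :
    ∏ t ∈ Finset.range m, P (i+t) (i+t+1) ≤ matPow P m i (i+m) := by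
  induction m with
  | zero => rw [Finset.prod_range_zero, matPow_zero, if_pos (by omega)]
  | succ m ih =>
    rw [Finset.prod_range_succ, matPow_succ]
    have : i + (m+1) = (i+m) + 1 := by omega
    rw [this]
    calc (∏ t ∈ Finset.range m, P (i+t) (i+t+1)) * P (i+m) (i+m+1)
        ≤ matPow P m i (i+m) * P (i+m) ((i+m)+1) := mul_le_mul' ih le_rfl
      _ ≤ ∑' l, matPow P m i l * P l ((i+m)+1) := ENNReal.le_tsum (i+m)

end USFaux3
noncomputable def Qmat (P : ℕ → ℕ → ℝ≥0∞) (N : ℕ) : ℕ → ℕ → ℝ≥0∞ :=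
  fun i j => if i ≤ N ∧ j ≤ N then P i j else 0

noncomputable def uσ (P : ℕ → ℕ → ℝ≥0∞) (N n i : ℕ) : ℝ≥0∞ :=
  ∑' j, matPow (Qmat P N) n i j

namespace USFaux4
open USFaux USFaux2 USFaux3

variable {P : ℕ → ℕ → ℝ≥0∞} {N : ℕ}

lemma Qmat_le_P (P : ℕ → ℕ → ℝ≥0∞) (N i j : ℕ) : Qmat P N i j ≤ P i j := by
  unfold Qmat; split <;> simp

lemma Qmat_mono {N N' : ℕ} (h : N ≤ N') (i j : ℕ) : Qmat P N i j ≤ Qmat P N' i j := by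
  unfold Qmat
  split
  · next hcond => rw [if_pos ⟨hcond.1.trans h, hcond.2.trans h⟩]
  · simp

lemma Qpow_eq (hup : UpwardSkipFree P) :
    ∀ k i, i + k ≤ N → ∀ j, matPow (Qmat P N) k i j = matPow P k i j := by
  intro k
  induction k with
  | zero => intro i _ j; rw [matPow_zero, matPow_zero]
  | succ k ih =>
    intro i hi j
    rw [matPow_succ, matPow_succ]
    refine tsum_congr fun l => ?_
    rw [ih i (by omega) l]
    rcases eq_or_ne (matPow P k i l) 0 with h0 | h0
    · rw [h0, zero_mul, zero_mul]
    · have hl : l ≤ i + k := by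
        by_contra hl
        exact h0 (skipfree_pow hup k i l (by omega))
      congr 1
      unfold Qmat
      rcases le_or_gt j N with hj | hj
      · rw [if_pos ⟨by omega, hj⟩]
      · rw [if_neg (by omega), hup.2 l j (by omega)]

lemma Qcol_zero {i j : ℕ} (hiN : i ≤ N) (hj : N < j) (k : ℕ) :
    matPow (Qmat P N) k i j = 0 := by
  cases k with
  | zero => rw [matPow_zero, if_neg (by omega)]
  | succ k =>
    rw [matPow_succ]
    refine ENNReal.tsum_eq_zero.mpr fun l => ?_
    rw [show Qmat P N l j = 0 from if_neg (by omega), mul_zero]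

lemma Qrow_pow_zero {i : ℕ} (hiN : N < i) (k : ℕ) (j : ℕ) :
    matPow (Qmat P N) (1+k) i j = 0 := by
  rw [matPow_chapman]
  refine ENNReal.tsum_eq_zero.mpr fun l => ?_
  rw [matPow_one, show Qmat P N i l = 0 from if_neg (by omega), zero_mul]

lemma u_le_one (hP : IsTransitionMatrix P) (n i : ℕ) : uσ P N n i ≤ 1 := by
  calc uσ P N n i ≤ ∑' j, matPow P n i j :=
        ENNReal.tsum_le_tsum fun j => matPow_mono (Qmat_le_P P N) n i j
    _ = 1 := rowsum_pow hP n i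

lemma u_add (a b i : ℕ) : uσ P N (a+b) i = ∑' l, matPow (Qmat P N) a i l * uσ P N b l := by
  unfold uσ
  calc ∑' j, matPow (Qmat P N) (a+b) i j
      = ∑' j, ∑' l, matPow (Qmat P N) a i l * matPow (Qmat P N) b l j :=
        tsum_congr fun j => matPow_chapman _ a b i j
    _ = ∑' l, ∑' j, matPow (Qmat P N) a i l * matPow (Qmat P N) b l j := ENNReal.tsum_comm
    _ = ∑' l, matPow (Qmat P N) a i l * ∑' j, matPow (Qmat P N) b l j :=
        tsum_congr fun l => ENNReal.tsum_mul_left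

lemma u_anti (hP : IsTransitionMatrix P) {m n : ℕ} (h : m ≤ n) (i : ℕ) :
    uσ P N n i ≤ uσ P N m i := by
  have key : ∀ n i, uσ P N (n+1) i ≤ uσ P N n i := by
    intro n i
    rw [u_add n 1 i]
    calc ∑' l, matPow (Qmat P N) n i l * uσ P N 1 l
        ≤ ∑' l, matPow (Qmat P N) n i l * 1 :=
          ENNReal.tsum_le_tsum fun l => mul_le_mul' le_rfl (u_le_one hP 1 l)
      _ = uσ P N n i := by simp [uσ]
  exact antitone_nat_of_succ_le (f := fun n => uσ P N n i) (fun n => key n i) h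

lemma u_escape (hP : IsTransitionMatrix P) (hup : UpwardSkipFree P)
    {i : ℕ} (hiN : i ≤ N) :
    uσ P N (N+1) i ≤ 1 - ∏ j ∈ Finset.range (N+1), P j (j+1) := by
  set p := ∏ j ∈ Finset.range (N+1), P j (j+1) with hp
  set r := N + 1 - i with hr
  have hir : i + r = N + 1 := by omega
  have hpr : p ≤ matPow P r i (N+1) := by
    have h1 : p ≤ ∏ t ∈ Finset.range r, P (i+t) (i+t+1) := by
      rw [hp, show N + 1 = i + r from hir.symm, Finset.prod_range_add]
      calc (∏ t ∈ Finset.range i, P t (t+1)) * ∏ t ∈ Finset.range r, P (i+t) (i+t+1)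
          ≤ 1 * ∏ t ∈ Finset.range r, P (i+t) (i+t+1) :=
            mul_le_mul' (Finset.prod_le_one (fun _ _ => zero_le)
              (fun t _ => P_le_one hP t (t+1))) le_rfl
        _ = _ := one_mul _
    calc p ≤ ∏ t ∈ Finset.range r, P (i+t) (i+t+1) := h1
      _ ≤ matPow P r i (i+r) := up_path r i
      _ = matPow P r i (N+1) := by rw [hir]
  have hsplit : (∑' j, (if j = N+1 then 0 else matPow P r i j)) + matPow P r i (N+1) = 1 := by
    have h2 : (∑' j, (if j = N+1 then matPow P r i j else 0)) = matPow P r i (N+1) := by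
      rw [tsum_eq_single (N+1) (fun j hj => if_neg hj), if_pos rfl]
    rw [← h2, ← ENNReal.tsum_add]
    rw [← rowsum_pow hP r i]
    refine tsum_congr fun j => ?_
    by_cases h : j = N+1 <;> simp [h]
  have hle : uσ P N r i ≤ ∑' j, (if j = N+1 then 0 else matPow P r i j) := by
    refine ENNReal.tsum_le_tsum fun j => ?_
    by_cases h : j = N+1
    · rw [h, if_pos rfl, Qcol_zero hiN (by omega)]
    · rw [if_neg h]
      exact matPow_mono (Qmat_le_P P N) r i j
  have hfin : uσ P N r i + p ≤ 1 := by
    calc uσ P N r i + p ≤ (∑' j, (if j = N+1 then 0 else matPow P r i j)) + matPow P r i (N+1) :=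
          add_le_add hle hpr
      _ = 1 := hsplit
  calc uσ P N (N+1) i ≤ uσ P N r i := u_anti hP (by omega) i
    _ ≤ 1 - p := ENNReal.le_sub_of_add_le_right
        (by
          have : p ≤ 1 := le_trans (le_add_self.trans hfin) le_rfl
          exact (this.trans_lt ENNReal.one_lt_top).ne) hfin

lemma u_escape_all (hP : IsTransitionMatrix P) (hup : UpwardSkipFree P) (i : ℕ) :
    uσ P N (N+1) i ≤ 1 - ∏ j ∈ Finset.range (N+1), P j (j+1) := by
  rcases le_or_gt i N with h | h
  · exact u_escape hP hup h
  · have : uσ P N (N+1) i = 0 := by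
      unfold uσ
      refine ENNReal.tsum_eq_zero.mpr fun j => ?_
      rw [show N + 1 = 1 + N from by omega]
      exact Qrow_pow_zero h N j
    rw [this]; exact zero_le

lemma u_geom (hP : IsTransitionMatrix P) (hup : UpwardSkipFree P) (k i : ℕ) :
    uσ P N (k*(N+1)) i ≤ (1 - ∏ j ∈ Finset.range (N+1), P j (j+1))^k := by
  induction k generalizing i with
  | zero =>
    simp only [Nat.zero_mul, pow_zero]
    exact u_le_one hP 0 i
  | succ k ih =>
    have : (k+1)*(N+1) = (N+1) + k*(N+1) := by ring
    rw [this, u_add]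
    calc ∑' l, matPow (Qmat P N) (N+1) i l * uσ P N (k*(N+1)) l
        ≤ ∑' l, matPow (Qmat P N) (N+1) i l *
            (1 - ∏ j ∈ Finset.range (N+1), P j (j+1))^k :=
          ENNReal.tsum_le_tsum fun l => mul_le_mul' le_rfl (ih l)
      _ = (1 - ∏ j ∈ Finset.range (N+1), P j (j+1))^k * uσ P N (N+1) i := by
          rw [ENNReal.tsum_mul_right, mul_comm]; rfl
      _ ≤ (1 - ∏ j ∈ Finset.range (N+1), P j (j+1))^k *
            (1 - ∏ j ∈ Finset.range (N+1), P j (j+1)) :=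
          mul_le_mul' le_rfl (u_escape_all hP hup i)
      _ = _ := (pow_succ _ k).symm

end USFaux4
namespace USFaux5
open USFaux USFaux2 USFaux3 USFaux4

variable {P : ℕ → ℕ → ℝ≥0∞} {N : ℕ}

lemma iterate (R : ℕ → ℕ → ℝ≥0∞) (b x : ℕ → ℝ≥0∞)
    (hx : ∀ j, x j = b j + ∑' l, R j l * x l) :
    ∀ n i, x i = (∑ k ∈ Finset.range n, ∑' j, matPow R k i j * b j)
      + ∑' j, matPow R n i j * x j := by
  intro n
  induction n with
  | zero =>
    intro i
    rw [Finset.sum_range_zero, zero_add,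
      tsum_eq_single i (fun j hj => by rw [matPow_zero, if_neg (Ne.symm hj), zero_mul]),
      matPow_zero, if_pos rfl, one_mul]
  | succ n ih =>
    intro i
    have step : ∑' j, matPow R n i j * x j
        = (∑' j, matPow R n i j * b j) + ∑' j, matPow R (n+1) i j * x j := by
      calc ∑' j, matPow R n i j * x j
          = ∑' j, (matPow R n i j * b j + matPow R n i j * ∑' l, R j l * x l) :=
            tsum_congr fun j => by rw [hx j, mul_add]
        _ = (∑' j, matPow R n i j * b j)
              + ∑' j, matPow R n i j * ∑' l, R j l * x l := ENNReal.tsum_add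
        _ = (∑' j, matPow R n i j * b j) + ∑' j, matPow R (n+1) i j * x j := by
            congr 1
            calc ∑' j, matPow R n i j * ∑' l, R j l * x l
                = ∑' j, ∑' l, matPow R n i j * (R j l * x l) :=
                  tsum_congr fun j => ENNReal.tsum_mul_left.symm
              _ = ∑' l, ∑' j, matPow R n i j * (R j l * x l) := ENNReal.tsum_comm
              _ = ∑' l, (∑' j, matPow R n i j * R j l) * x l := by
                  refine tsum_congr fun l => ?_
                  rw [← ENNReal.tsum_mul_right]
                  exact tsum_congr fun j => by rw [mul_assoc]
              _ = ∑' l, matPow R (n+1) i l * x l :=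
                  tsum_congr fun l => by rw [← matPow_succ]
    rw [ih i, step, ← add_assoc, ← Finset.sum_range_succ]

lemma sol_eq_potential (hP : IsTransitionMatrix P) (hup : UpwardSkipFree P)
    (N : ℕ) (b x : ℕ → ℝ≥0∞)
    (hx : ∀ j, x j = b j + ∑' l, Qmat P N j l * x l)
    (M : ℝ≥0∞) (hM : M ≠ ∞) (hxM : ∀ j, x j ≤ M) (i : ℕ) :
    x i = potential (Qmat P N) b i := by
  set p := ∏ j ∈ Finset.range (N+1), P j (j+1) with hp
  have hp0 : p ≠ 0 := by
    rw [hp]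
    exact Finset.prod_ne_zero_iff.mpr fun j _ => Pup_ne_zero hup j
  have hq1 : 1 - p < 1 :=
    ENNReal.sub_lt_self ENNReal.one_ne_top one_ne_zero hp0
  have hpot : potential (Qmat P N) b i
      = ⨆ n, ∑ k ∈ Finset.range n, ∑' j, matPow (Qmat P N) k i j * b j :=
    ENNReal.tsum_eq_iSup_nat
  have h1 : potential (Qmat P N) b i ≤ x i := by
    rw [hpot]
    refine iSup_le fun n => ?_
    rw [iterate _ b x hx n i]
    exact le_self_add
  have h2 : x i ≤ potential (Qmat P N) b i := by
    have hk : ∀ k : ℕ, x i ≤ potential (Qmat P N) b i + M * (1-p)^k := by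
      intro k
      rw [iterate _ b x hx (k*(N+1)) i]
      refine add_le_add (ENNReal.sum_le_tsum _) ?_
      calc ∑' j, matPow (Qmat P N) (k*(N+1)) i j * x j
          ≤ ∑' j, matPow (Qmat P N) (k*(N+1)) i j * M :=
            ENNReal.tsum_le_tsum fun j => mul_le_mul' le_rfl (hxM j)
        _ = M * uσ P N (k*(N+1)) i := by rw [ENNReal.tsum_mul_right, mul_comm]; rfl
        _ ≤ M * (1-p)^k := mul_le_mul' le_rfl (u_geom hP hup k i)
    have hlim : Filter.Tendsto (fun k : ℕ => potential (Qmat P N) b i + M * (1-p)^k)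
        Filter.atTop (nhds (potential (Qmat P N) b i + M * 0)) :=
      Filter.Tendsto.add tendsto_const_nhds
        (ENNReal.Tendsto.const_mul
          (ENNReal.tendsto_pow_atTop_nhds_zero_of_lt_one hq1) (Or.inr hM))
    rw [mul_zero, add_zero] at hlim
    exact ge_of_tendsto' hlim hk
  exact le_antisymm h2 h1

end USFaux5
noncomputable def Sf (P : ℕ → ℕ → ℝ≥0∞) (c : ℕ → ℝ≥0∞) (N j : ℕ) : ℝ≥0∞ :=
  ∑ m ∈ Finset.Ico j (N+1), gfun P c m

namespace USFaux6
open USFaux USFaux2 USFaux3 USFaux4 USFaux5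

variable {P : ℕ → ℕ → ℝ≥0∞} {c : ℕ → ℝ≥0∞} {N : ℕ}

lemma Pminus_full (hP : IsTransitionMatrix P) (hup : UpwardSkipFree P)
    {j m : ℕ} (h : j + 1 ≤ m) : Pminus P j m = 1 := by
  unfold Pminus
  rw [← Finset.sum_subset (Finset.range_subset_range.mpr (by omega : j+2 ≤ m+1))
    (fun x _ hx => hup.2 j x (by simpa using Finset.mem_range.not.mp hx |> Nat.le_of_not_lt))]
  exact rowsum_fin hP hup j

lemma S_solves (hP : IsTransitionMatrix P) (hup : UpwardSkipFree P) (j : ℕ) :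
    (if j ≤ N then Sf P c N j else 0)
      = (if j ≤ N then c j else 0)
        + ∑' l, Qmat P N j l * (if l ≤ N then Sf P c N l else 0) := by
  by_cases hj : j ≤ N
  · rw [if_pos hj, if_pos hj]
    have htsum : (∑' l, Qmat P N j l * (if l ≤ N then Sf P c N l else 0))
        = ∑ l ∈ Finset.range (N+1), P j l * Sf P c N l := by
      rw [tsum_eq_sum (s := Finset.range (N+1)) (fun l hl => by
        rw [show Qmat P N j l = 0 from if_neg (fun hcon => by
          exact absurd hcon.2 (by simpa using hl)), zero_mul])]
      refine Finset.sum_congr rfl fun l hl => ?_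
      have hlN : l ≤ N := by have := Finset.mem_range.mp hl; omega
      rw [show Qmat P N j l = P j l from if_pos ⟨hj, hlN⟩, if_pos hlN]
    have hT : ∑ l ∈ Finset.range (N+1), P j l * Sf P c N l
        = ∑ m ∈ Finset.range (N+1), Pminus P j m * gfun P c m := by
      calc ∑ l ∈ Finset.range (N+1), P j l * Sf P c N l
          = ∑ l ∈ Finset.range (N+1), ∑ m ∈ Finset.range (N+1),
              (if l ≤ m then P j l * gfun P c m else 0) := by
            refine Finset.sum_congr rfl fun l _ => ?_
            have hIco : Finset.Ico l (N+1) = (Finset.range (N+1)).filter (fun m => l ≤ m) := by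
              ext m
              simp only [Finset.mem_Ico, Finset.mem_filter, Finset.mem_range]
              omega
            rw [show Sf P c N l = ∑ m ∈ Finset.Ico l (N+1), gfun P c m from rfl, hIco,
              Finset.sum_filter, Finset.mul_sum]
            refine Finset.sum_congr rfl fun m _ => ?_
            rw [mul_ite, mul_zero]
        _ = ∑ m ∈ Finset.range (N+1), Pminus P j m * gfun P c m := by
            rw [Finset.sum_comm]
            refine Finset.sum_congr rfl fun m hm => ?_
            have hmN := Finset.mem_range.mp hm
            have hfil : (Finset.range (N+1)).filter (fun l => l ≤ m) = Finset.range (m+1) := by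
              ext l
              simp only [Finset.mem_filter, Finset.mem_range]
              omega
            rw [← Finset.sum_filter, hfil, ← Finset.sum_mul]
            rfl
    rw [htsum, hT]
    have hsplit : ∑ m ∈ Finset.range (N+1), Pminus P j m * gfun P c m
        = (∑ m ∈ Finset.range j, Pminus P j m * gfun P c m)
          + (Pminus P j j * gfun P c j
            + ∑ m ∈ Finset.Ico (j+1) (N+1), Pminus P j m * gfun P c m) := by
      rw [Finset.range_eq_Ico,
        ← Finset.sum_Ico_consecutive _ (Nat.zero_le j) (by omega : j ≤ N+1),
        Finset.sum_eq_sum_Ico_succ_bot (by omega : j < N+1), ← Finset.range_eq_Ico]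
    rw [hsplit]
    have hSj : Sf P c N j = gfun P c j + ∑ m ∈ Finset.Ico (j+1) (N+1), gfun P c m := by
      rw [show Sf P c N j = ∑ m ∈ Finset.Ico j (N+1), gfun P c m from rfl,
        Finset.sum_eq_sum_Ico_succ_bot (by omega : j < N+1)]
    rw [hSj]
    have hones : ∑ m ∈ Finset.Ico (j+1) (N+1), Pminus P j m * gfun P c m
        = ∑ m ∈ Finset.Ico (j+1) (N+1), gfun P c m := by
      refine Finset.sum_congr rfl fun m hm => ?_
      rw [Pminus_full hP hup (Finset.mem_Ico.mp hm).1, one_mul]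
    rw [hones]
    have hkey := key_rec (c := c) hP hup j
    symm
    calc c j + (∑ m ∈ Finset.range j, Pminus P j m * gfun P c m
            + (Pminus P j j * gfun P c j + ∑ m ∈ Finset.Ico (j+1) (N+1), gfun P c m))
        = (c j + ∑ m ∈ Finset.range j, Pminus P j m * gfun P c m)
            + Pminus P j j * gfun P c j + ∑ m ∈ Finset.Ico (j+1) (N+1), gfun P c m := by ring
      _ = P j (j+1) * gfun P c j + Pminus P j j * gfun P c j
            + ∑ m ∈ Finset.Ico (j+1) (N+1), gfun P c m := by rw [← hkey]
      _ = (Pminus P j j + P j (j+1)) * gfun P c j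
            + ∑ m ∈ Finset.Ico (j+1) (N+1), gfun P c m := by ring
      _ = gfun P c j + ∑ m ∈ Finset.Ico (j+1) (N+1), gfun P c m := by
          rw [Pminus_self_add hP hup j, one_mul]
    -- goal is symmetric
  · rw [if_neg hj, if_neg hj]
    have : ∀ l : ℕ, Qmat P N j l * (if l ≤ N then Sf P c N l else 0) = 0 := fun l => by
      rw [show Qmat P N j l = 0 from if_neg (fun hcon => hj hcon.1), zero_mul]
    rw [tsum_congr this, tsum_zero, add_zero]

lemma Sf_le (j : ℕ) : Sf P c N j ≤ Sf P c N 0 :=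
  Finset.sum_le_sum_of_subset (Finset.Ico_subset_Ico (Nat.zero_le j) le_rfl)

lemma Sf_ne_top (hP : IsTransitionMatrix P) (hup : UpwardSkipFree P)
    (hc : ∀ j, c j ≠ ∞) (j : ℕ) : Sf P c N j ≠ ∞ := by
  rw [← lt_top_iff_ne_top]
  exact ENNReal.sum_lt_top.mpr fun m _ =>
    lt_top_iff_ne_top.mpr (gfun_ne_top hP hup hc m)

end USFaux6
namespace USFaux7
open USFaux USFaux2 USFaux3 USFaux4 USFaux5 USFaux6

variable {P : ℕ → ℕ → ℝ≥0∞} {c : ℕ → ℝ≥0∞} {N : ℕ}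

lemma pot_trunc (hP : IsTransitionMatrix P) (hup : UpwardSkipFree P)
    (hc : ∀ j, c j ≠ ∞) {N i : ℕ} (hi : i ≤ N) :
    potential (Qmat P N) c i = Sf P c N i := by
  have hstep1 : potential (Qmat P N) c i
      = potential (Qmat P N) (fun l => if l ≤ N then c l else 0) i := by
    unfold potential
    refine tsum_congr fun k => tsum_congr fun j => ?_
    by_cases hj : j ≤ N
    · simp [hj]
    · rw [Qcol_zero hi (by omega) k, zero_mul, zero_mul]
  have hsol := sol_eq_potential hP hup N (fun l => if l ≤ N then c l else 0)
    (fun j => if j ≤ N then Sf P c N j else 0)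
    (fun j => S_solves hP hup j)
    (Sf P c N 0) (Sf_ne_top hP hup hc 0)
    (fun j => by by_cases hj : j ≤ N <;> simp [hj, Sf_le j]) i
  rw [hstep1, ← hsol, if_pos hi]

lemma bridge (i : ℕ) :
    (∑' m : {m : ℕ // i ≤ m}, gfun P c m.1)
      = ⨆ N, ∑ m ∈ Finset.Ico i (N+1), gfun P c m := by
  have h1 : (∑' m : {m : ℕ // i ≤ m}, gfun P c m.1)
      = ∑' m : ℕ, Set.indicator {m | i ≤ m} (gfun P c) m :=
    tsum_subtype {m | i ≤ m} (gfun P c)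
  rw [h1, ENNReal.tsum_eq_iSup_nat' (Filter.tendsto_add_atTop_nat 1)]
  refine iSup_congr fun n => ?_
  have hfil : (Finset.range (n+1)).filter (fun m => i ≤ m) = Finset.Ico i (n+1) := by
    ext m
    simp only [Finset.mem_filter, Finset.mem_range, Finset.mem_Ico]
    omega
  rw [← hfil, Finset.sum_filter]
  refine Finset.sum_congr rfl fun m _ => ?_
  rw [Set.indicator_apply]
  rfl

lemma formula (hP : IsTransitionMatrix P) (hup : UpwardSkipFree P)
    (hc : ∀ j, c j ≠ ∞) (i : ℕ) :
    potential P c i = ∑' m : {m : ℕ // i ≤ m}, gfun P c m.1 := by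
  rw [bridge i]
  apply le_antisymm
  · rw [show potential P c i
        = ⨆ n, ∑ k ∈ Finset.range n, ∑' j, matPow P k i j * c j from
      ENNReal.tsum_eq_iSup_nat]
    refine iSup_le fun n => ?_
    calc ∑ k ∈ Finset.range n, ∑' j, matPow P k i j * c j
        = ∑ k ∈ Finset.range n, ∑' j, matPow (Qmat P (i+n)) k i j * c j := by
          refine Finset.sum_congr rfl fun k hk => tsum_congr fun j => ?_
          rw [Qpow_eq hup k i (by have := Finset.mem_range.mp hk; omega) j]
      _ ≤ potential (Qmat P (i+n)) c i :=
          ENNReal.sum_le_tsum (f := fun k => ∑' j, matPow (Qmat P (i+n)) k i j * c j) _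
      _ = Sf P c (i+n) i := pot_trunc hP hup hc (by omega)
      _ ≤ ⨆ N, ∑ m ∈ Finset.Ico i (N+1), gfun P c m :=
          le_iSup (fun N => ∑ m ∈ Finset.Ico i (N+1), gfun P c m) (i+n)
  · refine iSup_le fun N => ?_
    rcases le_or_gt i N with hi | hi
    · calc ∑ m ∈ Finset.Ico i (N+1), gfun P c m
          = potential (Qmat P N) c i := (pot_trunc hP hup hc hi).symm
        _ ≤ potential P c i :=
            ENNReal.tsum_le_tsum fun k => ENNReal.tsum_le_tsum fun j =>
              mul_le_mul' (matPow_mono (Qmat_le_P P N) k i j) le_rfl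
    · rw [Finset.Ico_eq_empty (by omega), Finset.sum_empty]
      exact zero_le

end USFaux7
theorem potential_of_upward_skip_free
    (P : ℕ → ℕ → ℝ≥0∞) (hP : IsTransitionMatrix P) (hirr : MCIrreducible P)
    (hup : UpwardSkipFree P)
    (c : ℕ → ℝ≥0∞) (hc : ∀ j, c j ≠ ∞) :
    (∀ i : ℕ, potential P c i =
        ∑' m : {m : ℕ // i ≤ m}, ∑ k ∈ Finset.range (m.1 + 1),
          F P k m.1 * c k / P k (k + 1)) ∧
    ((∀ i : ℕ, potential P c i < ∞) ↔ potential P c 0 < ∞) := by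
  have hform : ∀ i : ℕ, potential P c i = ∑' m : {m : ℕ // i ≤ m}, gfun P c m.1 :=
    fun i => USFaux7.formula hP hup hc i
  refine ⟨fun i => hform i, ⟨fun h => h 0, fun h i => ?_⟩⟩
  have hle : potential P c i ≤ potential P c 0 := by
    rw [hform i, hform 0]
    exact Summable.tsum_le_tsum_of_inj (fun m => ⟨m.1, Nat.zero_le _⟩)
      (fun a b hab => by
        have h2 := congrArg Subtype.val hab
        exact Subtype.ext h2)
      (fun _ _ => zero_le) (fun _ => le_rfl) ENNReal.summable ENNReal.summable
  exact hle.trans_lt h
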